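/- arXiv:2109.04166 — 4 statements merged into one kernel-verified Lean document; each statement's English description precedes it below -/
import Mathlib

section
/- Liouville-type theorem of Nishikawa (Euclidean case): Let n ≥ 1 and let u : ℝⁿ → ℝ be a C² function with u(x) ≥ 0 for all x. If there exists a constant c > 0 such that Δu(x) ≥ c · u(x)² for all x ∈ ℝⁿ, then u vanishes identically on ℝⁿ. -/
open Filter Set
open scoped Topology InnerProductSpace

/-- The Euclidean Laplacian of `u : ℝⁿ → ℝ`, defined as the trace of the Hessian,
i.e. the sum of the second derivatives in the directions of the standard
orthonormal basis. -/
noncomputable def euclideanLaplacian {n : ℕ} (u : EuclideanSpace ℝ (Fin n) → ℝ)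
    (x : EuclideanSpace ℝ (Fin n)) : ℝ :=
  ∑ i : Fin n,
    iteratedFDeriv ℝ 2 u x ![EuclideanSpace.single i 1, EuclideanSpace.single i 1]


/-- Second derivative test at a local max. -/
lemma second_deriv_nonpos_of_isLocalMax {φ φ' : ℝ → ℝ} {L : ℝ}
    (hd : ∀ᶠ t in 𝓝 (0:ℝ), HasDerivAt φ (φ' t) t)
    (hd2 : HasDerivAt φ' L 0)
    (hmax : IsLocalMax φ 0) : L ≤ 0 := by
  by_contra hL
  push_neg at hL
  have h0 : φ' 0 = 0 := hmax.hasDerivAt_eq_zero hd.self_of_nhds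
  -- slope of φ' tends to L > 0
  have hslope : Tendsto (fun t => φ' t / t) (𝓝[≠] (0:ℝ)) (𝓝 L) := by
    have h := hasDerivAt_iff_tendsto_slope.1 hd2
    refine h.congr fun t => ?_
    simp [slope_def_field, h0]
  have hev : ∀ᶠ t in 𝓝[≠] (0:ℝ), 0 < φ' t / t :=
    hslope.eventually (eventually_gt_nhds hL)
  -- get δ > 0 such that things hold on ball δ
  obtain ⟨δ₁, hδ₁, hball₁⟩ := Metric.mem_nhdsWithin_iff.1 hev
  obtain ⟨δ₂, hδ₂, hball₂⟩ := Metric.eventually_nhds_iff.1 hd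
  obtain ⟨δ₃, hδ₃, hball₃⟩ := Metric.eventually_nhds_iff.1 hmax
  set δ := min δ₁ (min δ₂ δ₃) with hδdef
  have hδ : 0 < δ := lt_min hδ₁ (lt_min hδ₂ hδ₃)
  have hsub : ∀ t ∈ Set.Icc (0:ℝ) (δ/2), dist t 0 < δ := by
    intro t ht
    rw [Real.dist_eq, sub_zero, abs_of_nonneg ht.1]
    linarith [ht.2]
  have hcont : ContinuousOn φ (Set.Icc 0 (δ/2)) := fun t ht =>
    (hball₂ (lt_of_lt_of_le (hsub t ht) (le_trans (min_le_right _ _) (min_le_left _ _)))).continuousAt.continuousWithinAt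
  have hmono : StrictMonoOn φ (Set.Icc 0 (δ/2)) := by
    apply strictMonoOn_of_deriv_pos (convex_Icc _ _) hcont
    intro t ht
    rw [interior_Icc] at ht
    have hdist : dist t 0 < δ := by
      rw [Real.dist_eq, sub_zero, abs_of_pos ht.1]; linarith [ht.2]
    have hder : HasDerivAt φ (φ' t) t :=
      hball₂ (lt_of_lt_of_le hdist (le_trans (min_le_right _ _) (min_le_left _ _)))
    rw [hder.deriv]
    have hpos : 0 < φ' t / t := hball₁ ⟨by
      rw [Metric.mem_ball]
      exact lt_of_lt_of_le hdist (min_le_left _ _), ne_of_gt ht.1⟩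
    have := mul_pos hpos ht.1
    rwa [div_mul_cancel₀] at this
    exact ne_of_gt ht.1
  have h1 : φ 0 < φ (δ/2) := hmono ⟨le_refl _, by linarith⟩ ⟨by linarith, le_refl _⟩ (by linarith)
  have h2 : φ (δ/2) ≤ φ 0 := by
    apply hball₃
    rw [Real.dist_eq, sub_zero, abs_of_pos (by linarith : (0:ℝ) < δ/2)]
    calc δ/2 < δ := by linarith
    _ ≤ δ₃ := le_trans (min_le_right _ _) (min_le_right _ _)
  linarith


lemma line_hasDerivAt' {n : ℕ} {u : EuclideanSpace ℝ (Fin n) → ℝ} (hu : ContDiff ℝ 2 u)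
    (y v : EuclideanSpace ℝ (Fin n)) (t : ℝ) :
    HasDerivAt (fun s => u (y + s • v)) (fderiv ℝ u (y + t • v) v) t := by
  have hline : HasDerivAt (fun s : ℝ => y + s • v) v t :=
    by simpa using ((hasDerivAt_id t).smul_const v).const_add y
  have hdu : HasFDerivAt u (fderiv ℝ u (y + t • v)) (y + t • v) :=
    (hu.differentiable (by norm_num)).differentiableAt.hasFDerivAt
  exact hdu.comp_hasDerivAt t hline

lemma line_hasDerivAt2 {n : ℕ} {u : EuclideanSpace ℝ (Fin n) → ℝ} (hu : ContDiff ℝ 2 u)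
    (y v : EuclideanSpace ℝ (Fin n)) :
    HasDerivAt (fun s => fderiv ℝ u (y + s • v) v)
      (iteratedFDeriv ℝ 2 u y ![v, v]) (0:ℝ) := by
  have hline : HasDerivAt (fun s : ℝ => y + s • v) v 0 :=
    by simpa using ((hasDerivAt_id (0:ℝ)).smul_const v).const_add y
  have hd2 : DifferentiableAt ℝ (fderiv ℝ u) y := by
    have := (hu.fderiv_right (m := 1) (by norm_num)).differentiable (by norm_num)
    exact this.differentiableAt
  have h1 : HasDerivAt (fun s : ℝ => fderiv ℝ u (y + s • v))
      (fderiv ℝ (fderiv ℝ u) y v) 0 := by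
    have hd2' : HasFDerivAt (fderiv ℝ u) (fderiv ℝ (fderiv ℝ u) y) (y + (0:ℝ) • v) := by
      simpa using hd2.hasFDerivAt
    exact hd2'.comp_hasDerivAt 0 hline
  have h2 := ((ContinuousLinearMap.apply ℝ ℝ v).hasFDerivAt).comp_hasDerivAt 0 h1
  rw [iteratedFDeriv_two_apply]
  exact h2


lemma q_hasDerivAt (a β : ℝ) (t : ℝ) :
    HasDerivAt (fun s : ℝ => a - 2*β*s - s^2) (-(2*β) - 2*t) t := by
  have h1 : HasDerivAt (fun s : ℝ => a - 2*β*s) (-(2*β)) t := by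
    simpa using ((hasDerivAt_id t).const_mul (2*β)).const_sub a
  have h2 : HasDerivAt (fun s : ℝ => s^2) (2*t) t := by
    simpa using hasDerivAt_pow 2 t
  exact h1.sub h2

lemma barrier_derivs (A a β : ℝ) (ha : 0 < a) :
    ∃ ψ : ℝ → ℝ,
      (∀ᶠ t in 𝓝 (0:ℝ), HasDerivAt (fun s => A * (a - 2*β*s - s^2)^(-2:ℤ)) (ψ t) t)
      ∧ HasDerivAt ψ (24*A*β^2*a^(-4:ℤ) + 4*A*a^(-3:ℤ)) 0 := by
  set q : ℝ → ℝ := fun s => a - 2*β*s - s^2 with hqdef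
  refine ⟨fun t => A * ((-2) * (q t)^(-3:ℤ) * (-(2*β) - 2*t)), ?_, ?_⟩
  · have hqc : Continuous q := by fun_prop
    have hev : ∀ᶠ t in 𝓝 (0:ℝ), 0 < q t := by
      have : q 0 = a := by simp [hqdef]
      apply (hqc.tendsto 0).eventually
      rw [this]
      exact eventually_gt_nhds ha
    filter_upwards [hev] with t ht
    have hz := (hasDerivAt_zpow (-2) (q t) (Or.inl (ne_of_gt ht))).comp t (q_hasDerivAt a β t)
    have : HasDerivAt (fun s => A * (a - 2*β*s - s^2)^(-2:ℤ)) _ t := hz.const_mul A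
    convert this using 1
    push_cast
    ring_nf
  · have hq0 : q 0 = a := by simp [hqdef]
    have hz := (hasDerivAt_zpow (-3) (q 0) (Or.inl (by rw [hq0]; exact ne_of_gt ha))).comp 0
      (q_hasDerivAt a β 0)
    have hlin : HasDerivAt (fun t : ℝ => -(2*β) - 2*t) (-2) 0 := by
      simpa using ((hasDerivAt_id (0:ℝ)).const_mul 2).const_sub (-(2*β))
    have hmul : HasDerivAt (fun y => (-2) * A * (((fun x => x ^ (-3:ℤ)) ∘ q * fun t => -(2*β) - 2*t) y)) _ 0 :=
      (hz.mul hlin).const_mul ((-2) * A)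
    have h2 : HasDerivAt (fun t => A * ((-2) * (q t)^(-3:ℤ) * (-(2*β) - 2*t)))
        ((-2)*A*(((-3:ℤ) * q 0 ^ (-3-1:ℤ) * (-(2*β) - 2*0)) * (-(2*β) - 2*0) + (q 0)^(-3:ℤ) * (-2))) 0 := by
      convert hmul using 1
      · funext t
        change A * ((-2) * (q t)^(-3:ℤ) * (-(2*β) - 2*t)) = (-2) * A * ((q t)^(-3:ℤ) * (-(2*β) - 2*t))
        ring
      · rfl
    rw [hq0] at h2
    convert h2 using 1
    push_cast
    ring_nf


lemma sum_inner_single_sq {n : ℕ} (z : EuclideanSpace ℝ (Fin n)) :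
    ∑ i : Fin n, (⟪z, EuclideanSpace.single i (1:ℝ)⟫_ℝ)^2 = ‖z‖^2 := by
  have h1 : ∀ i : Fin n, ⟪z, EuclideanSpace.single i (1:ℝ)⟫_ℝ = z i := by
    intro i
    rw [EuclideanSpace.inner_single_right]
    simp
  simp only [h1]
  rw [EuclideanSpace.norm_eq, Real.sq_sqrt (by positivity)]
  congr 1
  ext i
  simp [sq_abs]

set_option maxHeartbeats 1000000 in
lemma key_estimate {n : ℕ}
    (u : EuclideanSpace ℝ (Fin n) → ℝ) (hu : ContDiff ℝ 2 u)
    (hu_nonneg : ∀ x, 0 ≤ u x)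
    (c : ℝ) (hc : 0 < c)
    (hineq : ∀ x, c * (u x) ^ 2 ≤ euclideanLaplacian u x)
    (x₀ : EuclideanSpace ℝ (Fin n)) (R : ℝ) (hR : 0 < R) :
    u x₀ ≤ (24 + 4*n) / (c * R^2) := by
  set A : ℝ := (24 + 4*n) * R^2 / c with hAdef
  have hA : 0 < A := by positivity
  set f : EuclideanSpace ℝ (Fin n) → ℝ := fun x => R^2 - ‖x - x₀‖^2 with hfdef
  set w : EuclideanSpace ℝ (Fin n) → ℝ := fun x => A * (f x)^(-2:ℤ) with hwdef
  have hfx₀ : f x₀ = R^2 := by simp [hfdef]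
  have hpow2 : ∀ x : ℝ, x^(-2:ℤ) = (x^2)⁻¹ := fun x => by
    rw [zpow_neg]; norm_cast
  have hwx₀ : w x₀ = A / R^4 := by
    rw [hwdef]; simp only [hfx₀, hpow2]
    rw [show ((R^2)^2 : ℝ) = R^4 by ring, div_eq_mul_inv]
  -- max of u on the closed ball
  obtain ⟨z, hzmem, hz⟩ := (isCompact_closedBall x₀ R).exists_isMaxOn
    ⟨x₀, Metric.mem_closedBall_self hR.le⟩ hu.continuous.continuousOn
  set C : ℝ := u z with hCdef
  have hC0 : 0 ≤ C := hu_nonneg z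
  set D : ℝ := C + A/R^4 + 1 with hDdef
  have hD : 0 < D := by positivity
  set ε : ℝ := min (R^2) (Real.sqrt (A/D)) with hεdef
  have hε : 0 < ε := lt_min (by positivity) (Real.sqrt_pos.2 (by positivity))
  have hεR : ε ≤ R^2 := min_le_left _ _
  have hε2 : D ≤ A / ε^2 := by
    have h1 : ε ≤ Real.sqrt (A/D) := min_le_right _ _
    have h2 : ε^2 ≤ A/D := by
      have := Real.sq_sqrt (show (0:ℝ) ≤ A/D by positivity)
      nlinarith [Real.sqrt_nonneg (A/D)]
    rw [le_div_iff₀ (by positivity)]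
    calc D * ε^2 ≤ D * (A/D) := mul_le_mul_of_nonneg_left h2 hD.le
    _ = A := by field_simp
  -- the compact set S
  set S : Set (EuclideanSpace ℝ (Fin n)) := {x | ‖x - x₀‖^2 ≤ R^2 - ε} with hSdef
  have hScl : IsClosed S := isClosed_le (by fun_prop) continuous_const
  have hSsub : S ⊆ Metric.closedBall x₀ R := by
    intro x hx
    rw [Metric.mem_closedBall, dist_eq_norm]
    nlinarith [hx.out, norm_nonneg (x - x₀)]
  have hScomp : IsCompact S := (isCompact_closedBall x₀ R).of_isClosed_subset hScl hSsub
  have hx₀S : x₀ ∈ S := by simp only [hSdef, mem_setOf_eq, sub_self, norm_zero]; nlinarith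
  -- membership facts
  have hfS : ∀ x ∈ S, ε ≤ f x := by intro x hx; simp only [hfdef]; linarith [hx.out]
  -- w is continuous on points where f ≠ 0
  have hwcont : ∀ x : EuclideanSpace ℝ (Fin n), f x ≠ 0 → ContinuousAt w x := by
    intro x hx
    apply ContinuousAt.mul continuousAt_const
    exact (continuousAt_zpow₀ (f x) (-2) (Or.inl hx)).comp (by fun_prop)
  have hcontS : ContinuousOn (fun x => u x - w x) S := by
    intro x hx
    exact (hu.continuous.continuousAt.sub (hwcont x (by have := hfS x hx; intro h; rw [h] at this; linarith))).continuousWithinAt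
  -- max of h on S
  obtain ⟨y, hyS, hy⟩ := hScomp.exists_isMaxOn ⟨x₀, hx₀S⟩ hcontS
  have hfy : ε ≤ f y := hfS y hyS
  have hfypos : 0 < f y := lt_of_lt_of_le hε hfy
  -- y is a max on the open ball
  have hmaxball : ∀ x ∈ Metric.ball x₀ R, u x - w x ≤ u y - w y := by
    intro x hx
    by_cases hxS : x ∈ S
    · exact hy hxS
    · -- f x < ε
      have hfx1 : 0 < f x := by
        rw [Metric.mem_ball, dist_eq_norm] at hx
        simp only [hfdef]
        nlinarith [norm_nonneg (x - x₀)]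
      have hfx2 : f x < ε := by
        simp only [hSdef, mem_setOf_eq, not_le] at hxS
        simp only [hfdef]; linarith
      have hwx : D ≤ w x := by
        calc D ≤ A / ε^2 := hε2
        _ ≤ A / (f x)^2 := by
            apply div_le_div_of_nonneg_left hA.le (by positivity)
            nlinarith
        _ = w x := by
            rw [hwdef]; simp only [hpow2]; rw [div_eq_mul_inv]

      have hux : u x ≤ C := hz (hSsub hx₀S |> fun _ => Metric.ball_subset_closedBall hx)
      have h1 : u x - w x ≤ C - D := by linarith
      have h2 : u x₀ - w x₀ ≤ u y - w y := hy hx₀S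
      rw [hwx₀] at h2
      have : (0:ℝ) ≤ u x₀ := hu_nonneg x₀
      calc u x - w x ≤ C - D := h1
      _ = - (A/R^4) - 1 := by rw [hDdef]; ring
      _ ≤ u x₀ - A/R^4 := by linarith
      _ ≤ u y - w y := h2
  -- y is in the open ball
  have hyball : y ∈ Metric.ball x₀ R := by
    rw [Metric.mem_ball, dist_eq_norm]
    have := hyS.out
    nlinarith [norm_nonneg (y - x₀)]
  -- per-direction second derivative comparison
  set a : ℝ := f y with hadef
  have hiter : ∀ i : Fin n,
      iteratedFDeriv ℝ 2 u y ![EuclideanSpace.single i 1, EuclideanSpace.single i 1]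
        ≤ 24*A*(⟪y - x₀, (EuclideanSpace.single i (1:ℝ))⟫_ℝ)^2*a^(-4:ℤ) + 4*A*a^(-3:ℤ) := by
    intro i
    set v : EuclideanSpace ℝ (Fin n) := EuclideanSpace.single i 1 with hvdef
    have hvnorm : ‖v‖ = 1 := by simp [hvdef]
    set β : ℝ := ⟪y - x₀, v⟫_ℝ with hβdef
    obtain ⟨ψ, hψev, hψd⟩ := barrier_derivs A a β hfypos
    -- w along the line equals the barrier profile
    have hwline : ∀ t : ℝ, w (y + t • v) = A * (a - 2*β*t - t^2)^(-2:ℤ) := by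
      intro t
      have hnorm : ‖y + t • v - x₀‖^2 = ‖y - x₀‖^2 + 2*β*t + t^2 := by
        have : y + t • v - x₀ = (y - x₀) + t • v := by abel
        rw [this, norm_add_sq_real, real_inner_smul_right, norm_smul, hvnorm, ← hβdef]
        simp only [Real.norm_eq_abs, mul_one, sq_abs]
        ring
      simp only [hwdef, hfdef, hadef, hnorm]
      ring_nf
    -- local max along the line
    have hmem : ∀ᶠ t : ℝ in 𝓝 0, y + t • v ∈ Metric.ball x₀ R := by
      have hcont : Continuous fun t : ℝ => y + t • v := by fun_prop
      have h0 : (fun t : ℝ => y + t • v) 0 ∈ Metric.ball x₀ R := by simpa using hyball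
      exact hcont.continuousAt.eventually_mem (Metric.isOpen_ball.mem_nhds h0)
    have hlocmax : IsLocalMax (fun t : ℝ => u (y + t • v) - w (y + t • v)) 0 := by
      filter_upwards [hmem] with t ht
      have := hmaxball _ ht
      simpa using this
    have hd : ∀ᶠ t in 𝓝 (0:ℝ), HasDerivAt
        (fun s => u (y + s • v) - w (y + s • v))
        (fderiv ℝ u (y + t • v) v - ψ t) t := by
      filter_upwards [hψev] with t ht
      have h1 := line_hasDerivAt' hu y v t
      have h2 : HasDerivAt (fun s => w (y + s • v)) (ψ t) t := by
        have := ht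
        apply HasDerivAt.congr_of_eventuallyEq this
        exact Eventually.of_forall fun s => hwline s
      exact h1.sub h2
    have hd2 : HasDerivAt (fun t => fderiv ℝ u (y + t • v) v - ψ t)
        (iteratedFDeriv ℝ 2 u y ![v, v] - (24*A*β^2*a^(-4:ℤ) + 4*A*a^(-3:ℤ))) 0 :=
      (line_hasDerivAt2 hu y v).sub hψd
    have := second_deriv_nonpos_of_isLocalMax hd hd2 hlocmax
    linarith
  -- sum over directions
  have hsum : euclideanLaplacian u y ≤ 24*A*‖y - x₀‖^2*a^(-4:ℤ) + 4*A*(n:ℝ)*a^(-3:ℤ) := by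
    unfold euclideanLaplacian
    have hnormsq := sum_inner_single_sq (y - x₀)
    calc ∑ i : Fin n, iteratedFDeriv ℝ 2 u y ![EuclideanSpace.single i 1, EuclideanSpace.single i 1]
        ≤ ∑ i : Fin n, (24*A*(⟪y - x₀, (EuclideanSpace.single i (1:ℝ))⟫_ℝ)^2*a^(-4:ℤ) + 4*A*a^(-3:ℤ)) :=
          Finset.sum_le_sum fun i _ => hiter i
      _ = 24*A*(∑ i : Fin n, (⟪y - x₀, (EuclideanSpace.single i (1:ℝ))⟫_ℝ)^2)*a^(-4:ℤ)
            + 4*A*(n:ℝ)*a^(-3:ℤ) := by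
          rw [Finset.sum_add_distrib, Finset.sum_const, ← Finset.sum_mul, ← Finset.mul_sum]
          simp only [Finset.card_univ, Fintype.card_fin, nsmul_eq_mul]
          ring
      _ = 24*A*‖y - x₀‖^2*a^(-4:ℤ) + 4*A*(n:ℝ)*a^(-3:ℤ) := by rw [hnormsq]
  -- comparison at y
  have hwy : w y = A * a^(-2:ℤ) := rfl
  have haR : a ≤ R^2 := by
    have := hyS.out
    simp only [hadef, hfdef]
    nlinarith [norm_nonneg (y - x₀)]
  have hnormy : ‖y - x₀‖^2 = R^2 - a := by simp only [hadef, hfdef]; ring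
  have hwy_pos : 0 < w y := by
    rw [hwy]
    have : (0:ℝ) < a^(-2:ℤ) := by
      rw [zpow_neg]
      positivity
    positivity
  have hcomp : c * (u y)^2 ≤ c * (w y)^2 := by
    calc c * (u y)^2 ≤ euclideanLaplacian u y := hineq y
    _ ≤ 24*A*‖y - x₀‖^2*a^(-4:ℤ) + 4*A*(n:ℝ)*a^(-3:ℤ) := hsum
    _ ≤ (24*A*R^2 + 4*A*(n:ℝ)*R^2) * a^(-4:ℤ) := by
        rw [hnormy]
        have ha4 : (0:ℝ) < a^(-4:ℤ) := by rw [zpow_neg]; positivity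
        have h3 : a^(-3:ℤ) = a * a^(-4:ℤ) := by
          rw [show (-3:ℤ) = 1 + -4 by norm_num, zpow_add₀ (ne_of_gt hfypos), zpow_one]
        rw [h3]
        have hn0 : (0:ℝ) ≤ (n:ℝ) := Nat.cast_nonneg n
        have h1 : (0:ℝ) ≤ 24*A*a*a^(-4:ℤ) :=
          mul_nonneg (mul_nonneg (by positivity) hfypos.le) ha4.le
        have h2 : (0:ℝ) ≤ 4*A*(n:ℝ)*(R^2-a)*a^(-4:ℤ) :=
          mul_nonneg (mul_nonneg (by positivity) (sub_nonneg.2 haR)) ha4.le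
        nlinarith [h1, h2]
    _ = c * (w y)^2 := by
        rw [hwy]
        have hcA : c * A = (24 + 4*(n:ℝ)) * R^2 := by
          rw [hAdef]; field_simp
        have h4 : (a^(-2:ℤ))^2 = a^(-4:ℤ) := by
          rw [sq, ← zpow_add₀ (ne_of_gt hfypos)]; norm_num
        rw [mul_pow, h4]
        have : c * (A^2 * a^(-4:ℤ)) = (c*A) * A * a^(-4:ℤ) := by ring
        rw [this, hcA]
        ring
  -- u y ≤ w y
  have hcmp2 : u y ≤ w y := by
    by_contra hlt
    push_neg at hlt
    have hsq : (w y)^2 < (u y)^2 := by nlinarith [hwy_pos]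
    have := mul_lt_mul_of_pos_left hsq hc
    linarith
  -- conclude
  have hfin : u x₀ - w x₀ ≤ u y - w y := hy hx₀S
  have hend : u x₀ ≤ A / R^4 := by rw [← hwx₀]; linarith
  have hAR : A / R^4 = (24 + 4*(n:ℝ)) / (c * R^2) := by
    rw [hAdef]
    field_simp
  rw [← hAR]
  exact hend


/-- Liouville-type theorem of Nishikawa (Euclidean case): a nonnegative `C²`
function `u` on `ℝⁿ` satisfying `Δu ≥ c u²` for some constant `c > 0` vanishes
identically. -/
theorem nishikawa_liouville {n : ℕ} (hn : 1 ≤ n)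
    (u : EuclideanSpace ℝ (Fin n) → ℝ) (hu : ContDiff ℝ 2 u)
    (hu_nonneg : ∀ x, 0 ≤ u x)
    (c : ℝ) (hc : 0 < c)
    (hineq : ∀ x, c * (u x) ^ 2 ≤ euclideanLaplacian u x) :
    ∀ x, u x = 0 := by
  intro x
  refine le_antisymm ?_ (hu_nonneg x)
  by_contra hpos
  push_neg at hpos
  set R : ℝ := Real.sqrt ((24 + 4*(n:ℝ)) / (c * u x)) + 1 with hRdef
  have hR : 0 < R := by positivity
  have hkey := key_estimate u hu hu_nonneg c hc hineq x R hR
  have hden : (0:ℝ) < c * u x := by positivity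
  have hs : Real.sqrt ((24 + 4*(n:ℝ)) / (c * u x))^2 = (24 + 4*(n:ℝ)) / (c * u x) :=
    Real.sq_sqrt (by positivity)
  have h1 : (24 + 4*(n:ℝ)) / (c * u x) < R^2 := by
    nlinarith [Real.sqrt_nonneg ((24 + 4*(n:ℝ)) / (c * u x))]
  rw [div_lt_iff₀ hden] at h1
  have hR2 : (0:ℝ) < c * R^2 := by positivity
  have h2 : (24 + 4*(n:ℝ)) / (c * R^2) < u x := by
    rw [div_lt_iff₀ hR2]
    nlinarith
  linarith
end

section
/- Omori–Yau maximum principle on Euclidean space (infimum version): Let n ≥ 1 and let u : ℝⁿ → ℝ be a C² function with u_* = inf u > −∞. Then there exists a sequence of points (x_k), k ∈ ℕ (k ≥ 1), in ℝⁿ such that for each k: (i) u(x_k) < u_* + 1/k, (ii) ‖∇u(x_k)‖ < 1/k, and (iii) Δu(x_k) > −1/k. -/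
open Filter Set Metric
open scoped Topology



section Helpers

variable {E : Type*} [NormedAddCommGroup E] [NormedSpace ℝ E]

lemma line_hasDerivAt (x h : E) (t : ℝ) : HasDerivAt (fun s : ℝ => x + s • h) h t := by
  simpa using ((hasDerivAt_id t).smul_const h).const_add x

lemma line_contDiff (u : E → ℝ) (hu : ContDiff ℝ 2 u) (x h : E) :
    ContDiff ℝ 2 (fun t : ℝ => u (x + t • h)) :=
  hu.comp (contDiff_const.add (contDiff_id.smul contDiff_const))

lemma line_deriv (u : E → ℝ) (hu : ContDiff ℝ 2 u) (x h : E) (t : ℝ) :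
    HasDerivAt (fun s : ℝ => u (x + s • h)) (fderiv ℝ u (x + t • h) h) t :=
  ((hu.differentiable two_ne_zero _).hasFDerivAt).comp_hasDerivAt t (line_hasDerivAt x h t)

lemma line_deriv2 (u : E → ℝ) (hu : ContDiff ℝ 2 u) (x h : E) :
    HasDerivAt (fun s : ℝ => fderiv ℝ u (x + s • h) h) (fderiv ℝ (fderiv ℝ u) x h h) 0 := by
  have h1 : HasFDerivAt (fderiv ℝ u) (fderiv ℝ (fderiv ℝ u) x) x :=
    (((hu.fderiv_right (m := 1) (le_refl _)).differentiable one_ne_zero) x).hasFDerivAt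
  have h0 : x + (0:ℝ) • h = x := by simp
  rw [← h0] at h1
  have h2 : HasDerivAt (fun s : ℝ => fderiv ℝ u (x + s • h)) (fderiv ℝ (fderiv ℝ u) x h) 0 := by
    have := h1.comp_hasDerivAt 0 (line_hasDerivAt x h 0)
    rw [h0] at this
    exact this
  exact (ContinuousLinearMap.apply ℝ ℝ h).hasFDerivAt.comp_hasDerivAt 0 h2

lemma poly_hasDerivAt (c₀ c₁ c₂ t : ℝ) :
    HasDerivAt (fun s : ℝ => c₀ + 2*s*c₁ + s^2*c₂) (2*c₁ + 2*t*c₂) t := by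
  have h := ((hasDerivAt_const t c₀).add (((hasDerivAt_id t).const_mul (2:ℝ)).mul_const c₁)).add
    ((hasDerivAt_pow 2 t).mul_const c₂)
  refine h.congr_deriv ?_
  push_cast
  ring

end Helpers


lemma secondDeriv_nonneg_of_min (g : ℝ → ℝ) (hg : ContDiff ℝ 2 g) (hmin : ∀ t, g 0 ≤ g t) :
    0 ≤ deriv (deriv g) 0 := by
  by_contra hneg
  push_neg at hneg
  have hdiff : Differentiable ℝ g := hg.differentiable two_ne_zero
  have hdiff' : Differentiable ℝ (deriv g) := by
    have h1 : ContDiff ℝ 1 (deriv g) := by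
      have := hg.fderiv_right (m := 1) (le_refl _)
      have h2 : deriv g = fun t => fderiv ℝ g t 1 := by
        funext t; rw [← fderiv_apply_one_eq_deriv]
      rw [h2]
      exact (ContinuousLinearMap.apply ℝ ℝ (1:ℝ)).contDiff.comp this
    exact h1.differentiable one_ne_zero
  have hloc : IsLocalMin g 0 := Filter.Eventually.of_forall hmin
  have hg0 : deriv g 0 = 0 := hloc.deriv_eq_zero
  have hd2 : HasDerivAt (deriv g) (deriv (deriv g) 0) 0 := (hdiff' 0).hasDerivAt
  have hslope := hasDerivAt_iff_tendsto_slope.mp hd2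
  have hev : ∀ᶠ t in 𝓝[≠] (0:ℝ), slope (deriv g) 0 t < deriv (deriv g) 0 / 2 :=
    hslope.eventually_lt_const (by linarith)
  rw [eventually_nhdsWithin_iff] at hev
  obtain ⟨δ, hδ, hδ'⟩ := Metric.eventually_nhds_iff.mp hev
  have hneg' : ∀ t : ℝ, 0 < t → t < δ → deriv g t < 0 := by
    intro t ht htδ
    have h1 := hδ' (y := t) (by simpa [Real.dist_eq, abs_of_pos ht] using htδ) (by simp [ht.ne'])
    rw [slope_def_field, hg0] at h1
    have h2 : (deriv g t - 0) / (t - 0) < deriv (deriv g) 0 / 2 := by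
      simpa [div_sub_div_same, slope] using h1
    have : deriv g t / t < 0 := by
      simpa using h2.trans_le (by linarith)
    have := (div_neg_iff).mp this
    rcases this with ⟨h3, h4⟩ | ⟨h3, h4⟩
    · linarith
    · exact h3
  have hanti : StrictAntiOn g (Icc 0 (δ/2)) := by
    apply strictAntiOn_of_deriv_neg (convex_Icc _ _) (hdiff.continuous.continuousOn)
    intro x hx
    rw [interior_Icc] at hx
    exact hneg' x hx.1 (by linarith [hx.2])
  have := hanti (left_mem_Icc.mpr (by linarith)) (right_mem_Icc.mpr (by linarith)) (by linarith)
  exact absurd (hmin (δ/2)) (not_le.mpr this)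

lemma omori_key {n : ℕ} (u : EuclideanSpace ℝ (Fin n) → ℝ) (hu : ContDiff ℝ 2 u)
    (hbd : BddBelow (Set.range u)) {ε : ℝ} (hε : 0 < ε) :
    ∃ z, u z < sInf (Set.range u) + ε ∧ ‖gradient u z‖ ≤ 2*ε ∧
      -(2*(n:ℝ)*ε) ≤ euclideanLaplacian u z := by
  set m := sInf (Set.range u) with hm
  obtain ⟨y, ⟨x₀, rfl⟩, hx₀⟩ := Real.lt_sInf_add_pos (Set.range_nonempty u) hε
  rw [← hm] at hx₀
  have hmle : ∀ y, m ≤ u y := fun y => csInf_le hbd (Set.mem_range_self y)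
  set v := fun x => u x + ε * ‖x - x₀‖^2 with hv
  have hvc : Continuous v :=
    hu.continuous.add (continuous_const.mul (((continuous_id.sub continuous_const).norm).pow 2))
  set R := Real.sqrt ((u x₀ - m)/ε) + 1 with hR
  have hsq := Real.sq_sqrt (show (0:ℝ) ≤ (u x₀ - m)/ε from div_nonneg (by linarith [hmle x₀]) hε.le)
  have hsn := Real.sqrt_nonneg ((u x₀ - m)/ε)
  have hR0 : 0 ≤ R := by positivity
  have hRsq : u x₀ - m ≤ ε * R^2 := by
    have h1 : (u x₀ - m)/ε ≤ R^2 := by nlinarith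
    calc u x₀ - m = ε * ((u x₀ - m)/ε) := by field_simp
    _ ≤ ε * R^2 := by nlinarith
  obtain ⟨z, hzmem, hzmin⟩ := (isCompact_closedBall x₀ R).exists_isMinOn
    ⟨x₀, mem_closedBall_self hR0⟩ hvc.continuousOn
  have hvx₀ : v x₀ = u x₀ := by simp [hv]
  have hglob : ∀ y, v z ≤ v y := by
    intro y
    by_cases hy : y ∈ closedBall x₀ R
    · exact hzmin hy
    · have hdist : R < ‖y - x₀‖ := by
        rw [Metric.mem_closedBall, dist_eq_norm] at hy
        exact lt_of_not_ge hy
      have h2 : R^2 ≤ ‖y - x₀‖^2 := by nlinarith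
      have h3 : v x₀ ≤ v y := by
        have : v y = u y + ε * ‖y - x₀‖^2 := rfl
        rw [this, hvx₀]
        nlinarith [hmle y]
      exact le_trans (hzmin (mem_closedBall_self hR0)) h3
  have hz0 : v z ≤ u x₀ := by rw [← hvx₀]; exact hglob x₀
  have huzv : u z ≤ v z := le_add_of_nonneg_right (by positivity)
  have huz : u z < m + ε := lt_of_le_of_lt (huzv.trans hz0) hx₀
  have hznorm : ‖z - x₀‖ ≤ 1 := by
    by_contra hc
    push_neg at hc
    have h1 : u z + ε * ‖z - x₀‖^2 ≤ u x₀ := hz0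
    have hgt1 : 1 < ‖z - x₀‖^2 := by nlinarith
    nlinarith [hmle z]
  -- directional analysis
  have key_dir : ∀ h : EuclideanSpace ℝ (Fin n),
      fderiv ℝ u z h = -(2*ε) * (inner ℝ (z - x₀) h : ℝ) ∧
      -(2 * ε * ‖h‖^2) ≤ fderiv ℝ (fderiv ℝ u) z h h := by
    intro h
    set c₁ : ℝ := (inner ℝ (z - x₀) h : ℝ) with hc₁
    set g := fun t : ℝ => u (z + t • h) with hg
    have hgc : ContDiff ℝ 2 g := line_contDiff u hu z h
    set p := fun t : ℝ => ‖z - x₀‖^2 + 2*t*c₁ + t^2*‖h‖^2 with hp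
    have hGp : ∀ t, v (z + t • h) = g t + ε * p t := by
      intro t
      have e0 : z + t • h - x₀ = (z - x₀) + t • h := by abel
      have e1 : ‖(z - x₀) + t • h‖^2 = ‖z - x₀‖^2 + 2*t*c₁ + t^2*‖h‖^2 := by
        rw [norm_add_sq_real, real_inner_smul_right, norm_smul, mul_pow, Real.norm_eq_abs, sq_abs]
        try ring
      show u (z + t • h) + ε * ‖z + t • h - x₀‖^2 = g t + ε * p t
      rw [e0, e1]
    have hmin : ∀ t, g 0 + ε * p 0 ≤ g t + ε * p t := by
      intro t
      have h0 := hGp 0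
      simp only [zero_smul, add_zero] at h0
      rw [← h0, ← hGp t]
      exact hglob _
    set G := fun t : ℝ => g t + ε * p t with hG
    have hGd : ∀ t, HasDerivAt G (fderiv ℝ u (z + t • h) h + ε * (2*c₁ + 2*t*‖h‖^2)) t := by
      intro t
      exact (line_deriv u hu z h t).add ((poly_hasDerivAt _ _ _ t).const_mul ε)
    have hGc : ContDiff ℝ 2 G := by
      apply hgc.add
      apply contDiff_const.mul
      apply (contDiff_const.add ((contDiff_const.mul contDiff_id).mul contDiff_const)).add
      exact (contDiff_id.pow 2).mul contDiff_const
    have hlocmin : IsLocalMin G 0 := Filter.Eventually.of_forall hmin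
    -- first derivative zero
    have hd0 : deriv G 0 = 0 := hlocmin.deriv_eq_zero
    have hd0' : fderiv ℝ u z h + ε * (2*c₁) = 0 := by
      have := (hGd 0).deriv
      rw [hd0] at this
      simp only [zero_smul, add_zero, mul_zero] at this
      linarith [this.symm]
    constructor
    · linarith
    -- second derivative
    have hderivG : deriv G = fun t => fderiv ℝ u (z + t • h) h + ε * (2*c₁ + 2*t*‖h‖^2) := by
      funext t; exact (hGd t).deriv
    have hd2 : HasDerivAt (deriv G) (fderiv ℝ (fderiv ℝ u) z h h + ε * (2*‖h‖^2)) 0 := by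
      rw [hderivG]
      have hlin : HasDerivAt (fun t : ℝ => ε * (2*c₁ + 2*t*‖h‖^2)) (ε * (2*‖h‖^2)) 0 := by
        have := ((hasDerivAt_const (0:ℝ) (2*c₁)).add
          (((hasDerivAt_id (0:ℝ)).const_mul (2:ℝ)).mul_const (‖h‖^2))).const_mul ε
        simpa using this
      exact (line_deriv2 u hu z h).add hlin
    have h2nn : 0 ≤ deriv (deriv G) 0 := secondDeriv_nonneg_of_min G hGc hmin
    rw [hd2.deriv] at h2nn
    linarith
  -- gradient bound
  have hfd : ‖fderiv ℝ u z‖ ≤ 2*ε := by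
    refine ContinuousLinearMap.opNorm_le_bound _ (by positivity) fun h => ?_
    rw [Real.norm_eq_abs, (key_dir h).1, abs_mul, abs_neg, abs_of_pos (by positivity : (0:ℝ) < 2*ε)]
    have h1 := abs_real_inner_le_norm (z - x₀) h
    have h2 : ‖z - x₀‖ * ‖h‖ ≤ ‖h‖ := by nlinarith [norm_nonneg h, norm_nonneg (z - x₀)]
    nlinarith [abs_nonneg (inner ℝ (z - x₀) h : ℝ)]
  have hgrad : ‖gradient u z‖ ≤ 2*ε := by
    unfold gradient
    rw [LinearIsometryEquiv.norm_map]
    exact hfd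
  refine ⟨z, huz, hgrad, ?_⟩
  unfold euclideanLaplacian
  have hbound : ∀ i : Fin n, -(2*ε) ≤
      iteratedFDeriv ℝ 2 u z ![EuclideanSpace.single i 1, EuclideanSpace.single i 1] := by
    intro i
    rw [iteratedFDeriv_two_apply]
    simp only [Matrix.cons_val_zero, Matrix.cons_val_one, Matrix.head_cons]
    have h2 := (key_dir (EuclideanSpace.single i (1:ℝ))).2
    rw [EuclideanSpace.norm_single] at h2
    simpa using h2
  calc -(2*(n:ℝ)*ε) = ∑ _i : Fin n, -(2*ε) := by
        rw [Finset.sum_const, Finset.card_univ, Fintype.card_fin]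
        push_cast; ring
  _ ≤ _ := Finset.sum_le_sum fun i _ => hbound i

/-- Omori–Yau maximum principle on Euclidean space (infimum version): if
`u : ℝⁿ → ℝ` is `C²` and bounded below, with infimum `u_*`, then there is a
sequence of points `x k` with `u (x k) < u_* + 1/k`, `‖∇u (x k)‖ < 1/k` and
`Δu (x k) > -1/k` for every `k ≥ 1`. -/
theorem omori_yau_inf {n : ℕ} (hn : 1 ≤ n)
    (u : EuclideanSpace ℝ (Fin n) → ℝ) (hu : ContDiff ℝ 2 u)
    (hbd : BddBelow (Set.range u)) :
    ∃ x : ℕ → EuclideanSpace ℝ (Fin n), ∀ k : ℕ, 1 ≤ k →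
      (u (x k) < sInf (Set.range u) + 1 / (k : ℝ)) ∧
      ‖gradient u (x k)‖ < 1 / (k : ℝ) ∧
      (-(1 / (k : ℝ)) < euclideanLaplacian u (x k)) := by
  have H : ∀ k : ℕ, ∃ z : EuclideanSpace ℝ (Fin n), 1 ≤ k →
      (u z < sInf (Set.range u) + 1 / (k : ℝ)) ∧
      ‖gradient u z‖ < 1 / (k : ℝ) ∧
      (-(1 / (k : ℝ)) < euclideanLaplacian u z) := by
    intro k
    by_cases hk : 1 ≤ k
    · have hk' : (1:ℝ) ≤ (k:ℝ) := by exact_mod_cast hk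
      have hkpos : (0:ℝ) < (k:ℝ) := by linarith
      have hn' : (1:ℝ) ≤ (n:ℝ) := by exact_mod_cast hn
      set ε : ℝ := 1 / ((2*(n:ℝ)+2) * k) with hεdef
      have hε : 0 < ε := by positivity
      obtain ⟨z, h1, h2, h3⟩ := omori_key u hu hbd hε
      have e1 : ε ≤ 1/(k:ℝ) := by
        rw [hεdef, div_le_div_iff₀ (by positivity) hkpos]; nlinarith
      have e2 : 2*ε < 1/(k:ℝ) := by
        rw [hεdef, mul_one_div, div_lt_div_iff₀ (by positivity) hkpos]; nlinarith
      have e3 : 2*(n:ℝ)*ε < 1/(k:ℝ) := by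
        rw [hεdef, mul_one_div, div_lt_div_iff₀ (by positivity) hkpos]; nlinarith
      exact ⟨z, fun _ => ⟨h1.trans_le (by linarith), h2.trans_lt e2, by linarith⟩⟩
    · exact ⟨0, fun h => absurd h hk⟩
  choose x hx using H
  exact ⟨x, hx⟩
end

section
/- Key inequality in the proof of Nishikawa's lemma (Euclidean case): Let n ≥ 1, let c > 0, and let u : ℝⁿ → ℝ be a C² function with u(x) ≥ 0 and Δu(x) ≥ c · u(x)² for all x. Define F : ℝⁿ → ℝ by F = 1/√(1 + u). Then at every point of ℝⁿ one has 0 ≤ c · u²/(1 + u)² ≤ 6 ‖∇F‖² − 2 F ΔF. -/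
noncomputable def psi1 (t : ℝ) : ℝ := -(2 * (1 + t) * Real.sqrt (1 + t))⁻¹
noncomputable def psi2 (t : ℝ) : ℝ := 3 * ((4 * ((1 + t) ^ 2 * Real.sqrt (1 + t)))⁻¹)

lemma sqrt_stuff {t : ℝ} (ht : 0 ≤ t) :
    0 < Real.sqrt (1 + t) ∧ (Real.sqrt (1 + t)) ^ 2 = 1 + t := by
  have h : (0:ℝ) < 1 + t := by linarith
  exact ⟨Real.sqrt_pos.mpr h, Real.sq_sqrt h.le⟩

lemma hasDerivAt_psi {t : ℝ} (ht : 0 ≤ t) :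
    HasDerivAt (fun t => (Real.sqrt (1 + t))⁻¹) (psi1 t) t := by
  obtain ⟨hr, hr2⟩ := sqrt_stuff ht
  have hone : HasDerivAt (fun t : ℝ => 1 + t) 1 t := (hasDerivAt_id t).const_add 1
  have hs : HasDerivAt (fun t : ℝ => Real.sqrt (1 + t)) (1 / (2 * Real.sqrt (1 + t))) t := by
    simpa [Function.comp_def] using (Real.hasDerivAt_sqrt (by positivity : (1:ℝ) + t ≠ 0)).comp t hone
  have : HasDerivAt (fun t => (Real.sqrt (1 + t))⁻¹)
      (-(1 / (2 * Real.sqrt (1 + t))) / Real.sqrt (1 + t) ^ 2) t := hs.inv hr.ne'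
  convert this using 1
  rw [psi1]
  generalize hR : Real.sqrt (1 + t) = r at hr hr2 ⊢
  rw [← hr2]
  field_simp

lemma hasDerivAt_psi1 {t : ℝ} (ht : 0 ≤ t) :
    HasDerivAt psi1 (psi2 t) t := by
  obtain ⟨hr, hr2⟩ := sqrt_stuff ht
  have hone : HasDerivAt (fun t : ℝ => 1 + t) 1 t := (hasDerivAt_id t).const_add 1
  have hs : HasDerivAt (fun t : ℝ => Real.sqrt (1 + t)) (1 / (2 * Real.sqrt (1 + t))) t := by
    simpa [Function.comp_def] using (Real.hasDerivAt_sqrt (by positivity : (1:ℝ) + t ≠ 0)).comp t hone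
  have hd : HasDerivAt (fun t : ℝ => 2 * (1 + t) * Real.sqrt (1 + t))
      (2 * 1 * Real.sqrt (1 + t) + 2 * (1 + t) * (1 / (2 * Real.sqrt (1 + t)))) t :=
    (hone.const_mul 2).mul hs
  have hdne : 2 * (1 + t) * Real.sqrt (1 + t) ≠ 0 := by positivity
  have : HasDerivAt psi1 (-(-(2 * 1 * Real.sqrt (1 + t) + 2 * (1 + t) * (1 / (2 * Real.sqrt (1 + t)))) /
      (2 * (1 + t) * Real.sqrt (1 + t)) ^ 2)) t := (hd.inv hdne).neg
  convert this using 1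
  rw [psi2]
  generalize hR : Real.sqrt (1 + t) = r at hr hr2 ⊢
  rw [← hr2]
  field_simp
  ring


/-- Key inequality in the proof of Nishikawa's lemma (Euclidean case): if `u ≥ 0`
is `C²` with `Δu ≥ c u²` for a constant `c > 0`, and `F = 1/√(1 + u)`, then
`0 ≤ c u²/(1 + u)² ≤ 6 ‖∇F‖² - 2 F ΔF` everywhere. -/
theorem nishikawa_key_inequality {n : ℕ} (hn : 1 ≤ n)
    (c : ℝ) (hc : 0 < c)
    (u : EuclideanSpace ℝ (Fin n) → ℝ) (hu : ContDiff ℝ 2 u)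
    (hu_nonneg : ∀ x, 0 ≤ u x)
    (hineq : ∀ x, c * (u x) ^ 2 ≤ euclideanLaplacian u x)
    (F : EuclideanSpace ℝ (Fin n) → ℝ)
    (hF : F = fun x => 1 / Real.sqrt (1 + u x)) :
    ∀ x, 0 ≤ c * (u x) ^ 2 / (1 + u x) ^ 2 ∧
      c * (u x) ^ 2 / (1 + u x) ^ 2 ≤
        6 * ‖gradient F x‖ ^ 2 - 2 * F x * euclideanLaplacian F x := by
  have hud : Differentiable ℝ u := hu.differentiable (by norm_num)
  have hg1 : ContDiff ℝ 1 (fderiv ℝ u) := hu.fderiv_right (by norm_num)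
  have hgd : Differentiable ℝ (fderiv ℝ u) := hg1.differentiable one_ne_zero
  have claim1 : ∀ y, HasFDerivAt F (psi1 (u y) • fderiv ℝ u y) y := by
    intro y
    have hpos : 0 ≤ u y := hu_nonneg y
    have h := (hasDerivAt_psi hpos).comp_hasFDerivAt y (hud y).hasFDerivAt
    simpa [hF, Function.comp_def, one_div] using h
  have hfdF : fderiv ℝ F = fun y => psi1 (u y) • fderiv ℝ u y :=
    funext fun y => (claim1 y).fderiv
  intro x
  -- gradient of F
  have hgradF : gradient F x = psi1 (u x) • gradient u x := by
    have h1 : HasGradientAt F (psi1 (u x) • gradient u x) x := by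
      rw [hasGradientAt_iff_hasFDerivAt]
      simp only [map_smul, gradient, LinearIsometryEquiv.apply_symm_apply]
      exact claim1 x
    exact h1.gradient
  have hnormF : ‖gradient F x‖ ^ 2 = (psi1 (u x)) ^ 2 * ‖gradient u x‖ ^ 2 := by
    rw [hgradF, norm_smul, mul_pow, Real.norm_eq_abs, sq_abs]
  -- second derivatives of F
  have hdu : HasFDerivAt u (fderiv ℝ u x) x := (hud x).hasFDerivAt
  have hcc : HasFDerivAt (fun y => psi1 (u y)) (psi2 (u x) • fderiv ℝ u x) x :=
    (hasDerivAt_psi1 (hu_nonneg x)).comp_hasFDerivAt x hdu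
  have hG : HasFDerivAt (fderiv ℝ u) (fderiv ℝ (fderiv ℝ u) x) x := (hgd x).hasFDerivAt
  have hsmul := hcc.smul hG
  have hffF : fderiv ℝ (fderiv ℝ F) x =
      psi1 (u x) • fderiv ℝ (fderiv ℝ u) x +
        (psi2 (u x) • fderiv ℝ u x).smulRight (fderiv ℝ u x) := by
    rw [hfdF]; exact hsmul.fderiv
  have hsec : ∀ v, iteratedFDeriv ℝ 2 F x ![v, v] =
      psi1 (u x) * iteratedFDeriv ℝ 2 u x ![v, v] +
        psi2 (u x) * (fderiv ℝ u x v) ^ 2 := by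
    intro v
    rw [iteratedFDeriv_two_apply, iteratedFDeriv_two_apply, hffF]
    simp only [Matrix.cons_val_zero, Matrix.cons_val_one, Matrix.head_cons,
      ContinuousLinearMap.add_apply, ContinuousLinearMap.coe_smul', Pi.smul_apply,
      ContinuousLinearMap.smulRight_apply, smul_eq_mul]
    ring
  have hlapF : euclideanLaplacian F x =
      psi1 (u x) * euclideanLaplacian u x +
        psi2 (u x) * ∑ i, (fderiv ℝ u x (EuclideanSpace.single i 1)) ^ 2 := by
    simp only [euclideanLaplacian, hsec, Finset.sum_add_distrib, ← Finset.mul_sum]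
  have hA : ∑ i, (fderiv ℝ u x (EuclideanSpace.single i 1)) ^ 2 = ‖gradient u x‖ ^ 2 := by
    have h1 : ∀ i : Fin n, fderiv ℝ u x (EuclideanSpace.single i 1) = gradient u x i := by
      intro i
      have h2 : (inner ℝ (gradient u x) (EuclideanSpace.single i (1:ℝ)) : ℝ)
          = fderiv ℝ u x (EuclideanSpace.single i 1) := by
        simp only [gradient]
        exact InnerProductSpace.toDual_symm_apply
      rw [← h2, EuclideanSpace.inner_single_right]
      simp
    simp_rw [h1]
    rw [EuclideanSpace.norm_eq, Real.sq_sqrt (by positivity)]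
    simp [sq_abs]
  have hFx : F x = (Real.sqrt (1 + u x))⁻¹ := by rw [hF]; simp [one_div]
  have key : 6 * ‖gradient F x‖ ^ 2 - 2 * F x * euclideanLaplacian F x
      = euclideanLaplacian u x / (1 + u x) ^ 2 := by
    rw [hnormF, hlapF, hA, hFx]
    obtain ⟨hr, hr2⟩ := sqrt_stuff (hu_nonneg x)
    simp only [psi1, psi2]
    generalize hR : Real.sqrt (1 + u x) = r at hr hr2 ⊢
    rw [← hr2]
    field_simp
    ring
  constructor
  · positivity
  · rw [key]
    gcongr
    exact hineq x
end

section
/- Liouville consequence for the hyperbolic-angle inequality (Euclidean model case): Let n ≥ 1, let K > 0, and let v : ℝⁿ → ℝ be a C² function with v(x) ≥ 0 for all x, satisfying the differential inequality (1/2) Δv(x) ≥ K · v(x)² for all x ∈ ℝⁿ. Then v vanishes identically on ℝⁿ. -/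
set_option maxHeartbeats 1000000
open Filter Topology Metric

/-- Second-derivative test: at an interior local maximum the second derivative is `≤ 0`. -/
lemma secondDeriv_nonpos_of_isLocalMax {g : ℝ → ℝ} {a : ℝ}
    (hd : ∀ᶠ t in 𝓝 a, DifferentiableAt ℝ g t)
    (hd2 : DifferentiableAt ℝ (deriv g) a)
    (hmax : IsLocalMax g a) : deriv (deriv g) a ≤ 0 := by
  by_contra hpos
  push_neg at hpos
  have h0 : deriv g a = 0 := hmax.deriv_eq_zero
  -- slope of deriv g tends to deriv (deriv g) a > 0
  have hslope : Tendsto (slope (deriv g) a) (𝓝[≠] a) (𝓝 (deriv (deriv g) a)) :=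
    hasDerivAt_iff_tendsto_slope.1 hd2.hasDerivAt
  have hslope' : ∀ᶠ t in 𝓝[>] a, 0 < slope (deriv g) a t := by
    have : ∀ᶠ t in 𝓝[≠] a, 0 < slope (deriv g) a t :=
      hslope.eventually (eventually_gt_nhds hpos)
    exact this.filter_mono (nhdsWithin_mono a fun t ht => ne_of_gt ht)
  have hderivpos : ∀ᶠ t in 𝓝[>] a, 0 < deriv g t := by
    filter_upwards [hslope', self_mem_nhdsWithin] with t ht ht'
    have htgt : a < t := ht'
    have := ht
    rw [slope_def_field, div_pos_iff] at this
    rcases this with ⟨h1, _⟩ | ⟨_, h2⟩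
    · simp only [h0, sub_zero] at h1; linarith [h1]
    · linarith [h2, sub_pos.2 htgt]
  -- get an interval (a, b) where deriv g > 0 and g differentiable on ball
  obtain ⟨δ, hδpos, hδ⟩ := Metric.eventually_nhds_iff.1 (hd.and hmax)
  obtain ⟨b, hb, hbsub⟩ := (nhdsGT_basis a).eventually_iff.1 hderivpos
  set b' : ℝ := min b (a + δ/2) with hb'
  have hab' : a < b' := lt_min hb (by linarith)
  have hdiff : ∀ t ∈ Set.Icc a b', DifferentiableAt ℝ g t := by
    intro t ht
    refine (hδ ?_).1
    rw [Real.dist_eq, abs_sub_lt_iff]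
    constructor
    · have := ht.2; have : t ≤ a + δ/2 := le_trans this (min_le_right _ _); linarith
    · linarith [ht.1]
  have hmono : StrictMonoOn g (Set.Icc a b') := by
    apply strictMonoOn_of_deriv_pos (convex_Icc a b')
    · exact fun t ht => (hdiff t ht).continuousAt.continuousWithinAt
    · intro t ht
      rw [interior_Icc] at ht
      exact hbsub ⟨ht.1, lt_of_lt_of_le ht.2 (min_le_left _ _)⟩
  have hlt : g a < g b' := hmono ⟨le_refl a, le_of_lt hab'⟩ ⟨le_of_lt hab', le_refl b'⟩ hab'
  have hle : g b' ≤ g a := by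
    refine (hδ ?_).2
    rw [Real.dist_eq, abs_sub_lt_iff]
    constructor
    · have : b' ≤ a + δ/2 := min_le_right _ _; linarith
    · linarith
  linarith

variable {F : Type*} [NormedAddCommGroup F] [NormedSpace ℝ F]

lemma line_hasDerivAt_s12 {v : F → ℝ} (hv : ContDiff ℝ 2 v) (x e : F) (t : ℝ) :
    HasDerivAt (fun s : ℝ => v (x + s • e)) (fderiv ℝ v (x + t • e) e) t := by
  have hℓ : HasDerivAt (fun s : ℝ => x + s • e) e t := by
    simpa using ((hasDerivAt_id t).smul_const e).const_add x
  exact ((hv.differentiable (by norm_num)) (x + t • e)).hasFDerivAt.comp_hasDerivAt t hℓ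

lemma line_hasDerivAt2_s12 {v : F → ℝ} (hv : ContDiff ℝ 2 v) (x e : F) (t : ℝ) :
    HasDerivAt (fun s : ℝ => fderiv ℝ v (x + s • e) e)
      (fderiv ℝ (fderiv ℝ v) (x + t • e) e e) t := by
  have hℓ : HasDerivAt (fun s : ℝ => x + s • e) e t := by
    simpa using ((hasDerivAt_id t).smul_const e).const_add x
  have hfd : ContDiff ℝ 1 (fderiv ℝ v) := hv.fderiv_right (le_refl _)
  have h1 : HasDerivAt (fun s : ℝ => fderiv ℝ v (x + s • e))
      (fderiv ℝ (fderiv ℝ v) (x + t • e) e) t :=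
    ((hfd.differentiable one_ne_zero) (x + t • e)).hasFDerivAt.comp_hasDerivAt t hℓ
  simpa using h1.clm_apply (hasDerivAt_const t e)

lemma d2_line_eq {v : F → ℝ} (hv : ContDiff ℝ 2 v) (x e : F) :
    iteratedFDeriv ℝ 2 v x ![e, e] = deriv (deriv (fun s : ℝ => v (x + s • e))) 0 := by
  have h1 : deriv (fun s : ℝ => v (x + s • e)) = fun s : ℝ => fderiv ℝ v (x + s • e) e := by
    funext s; exact (line_hasDerivAt_s12 hv x e s).deriv
  rw [iteratedFDeriv_two_apply, h1]
  have := (line_hasDerivAt2_s12 hv x e 0).deriv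
  simp only [zero_smul, add_zero] at this
  rw [this]
  simp

lemma barrier_line (A b c : ℝ) (hc : 0 < c) :
    (∀ᶠ t in 𝓝 (0:ℝ), DifferentiableAt ℝ
        (fun t : ℝ => A * ((c - 2*b*t - t^2)^2)⁻¹) t) ∧
    DifferentiableAt ℝ (deriv (fun t : ℝ => A * ((c - 2*b*t - t^2)^2)⁻¹)) 0 ∧
    deriv (deriv (fun t : ℝ => A * ((c - 2*b*t - t^2)^2)⁻¹)) 0
      = 24*A*b^2/c^4 + 4*A/c^3 := by
  set q : ℝ → ℝ := fun t => c - 2*b*t - t^2 with hqdef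
  have hq : ∀ t : ℝ, HasDerivAt q (-(2*b) - 2*t) t := by
    intro t
    have h1 : HasDerivAt (fun t : ℝ => c - 2*b*t) (-(2*b)) t := by
      simpa using ((hasDerivAt_id t).const_mul (2*b)).const_sub c
    have h2 : HasDerivAt (fun t : ℝ => t^2) (2*t) t := by
      simpa using hasDerivAt_pow 2 t
    exact h1.sub h2
  set G : ℝ → ℝ := fun t => A * ((q t)^2)⁻¹ with hGdef
  set Fd : ℝ → ℝ := fun t => A * ((4*b + 4*t) * q t / q t ^ 4) with hFdef
  have hG : ∀ t : ℝ, q t ≠ 0 → HasDerivAt G (Fd t) t := by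
    intro t hqt
    have h1 : HasDerivAt (fun t => (q t)^2) (2 * q t ^ 1 * (-(2*b) - 2*t)) t := by
      simpa using (hq t).fun_pow 2
    have h2 := (h1.inv (pow_ne_zero 2 hqt)).const_mul A
    refine h2.congr_deriv ?_
    simp only [hFdef]
    rw [div_eq_mul_inv, show ((q t)^2)^2 = q t ^ 4 from by ring]
    ring
  have hq0 : q 0 = c := by simp [hqdef]
  have hqne : ∀ᶠ t in 𝓝 (0:ℝ), q t ≠ 0 := by
    have hcont : ContinuousAt q 0 := (hq 0).differentiableAt.continuousAt
    have : ∀ᶠ t in 𝓝 (0:ℝ), 0 < q t := hcont.eventually (by rw [hq0]; exact eventually_gt_nhds hc)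
    filter_upwards [this] with t ht using ne_of_gt ht
  have hdiffG : ∀ᶠ t in 𝓝 (0:ℝ), DifferentiableAt ℝ G t := by
    filter_upwards [hqne] with t ht using (hG t ht).differentiableAt
  have hderivG : deriv G =ᶠ[𝓝 (0:ℝ)] Fd := by
    filter_upwards [hqne] with t ht using (hG t ht).deriv
  -- derivative of Fd at 0
  have hN : HasDerivAt (fun t : ℝ => (4*b + 4*t) * q t)
      (4 * q 0 + (4*b + 4*0) * (-(2*b) - 2*0)) 0 := by
    have h1 : HasDerivAt (fun t : ℝ => 4*b + 4*t) 4 0 := by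
      simpa using ((hasDerivAt_id (0:ℝ)).const_mul 4).const_add (4*b)
    exact h1.mul (hq 0)
  have hD : HasDerivAt (fun t : ℝ => q t ^ 4) (4 * q 0 ^ 3 * (-(2*b) - 2*0)) 0 := by
    simpa using (hq 0).fun_pow 4
  have hD0 : q 0 ^ 4 ≠ 0 := by rw [hq0]; positivity
  have hFd : HasDerivAt Fd
      (A * (((4 * q 0 + (4*b + 4*0) * (-(2*b) - 2*0)) * q 0 ^ 4
        - (4*b + 4*0) * q 0 * (4 * q 0 ^ 3 * (-(2*b) - 2*0))) / (q 0 ^ 4) ^ 2)) 0 :=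
    (hN.div hD hD0).const_mul A
  have hFd0 : DifferentiableAt ℝ Fd 0 := hFd.differentiableAt
  refine ⟨hdiffG, ?_, ?_⟩
  · exact (hderivG.differentiableAt_iff).2 hFd0
  · rw [hderivG.deriv_eq, hFd.deriv, hq0]
    have hcne : c ≠ 0 := ne_of_gt hc
    field_simp
    ring

lemma norm_sq_line {n : ℕ} (z : EuclideanSpace ℝ (Fin n)) (i : Fin n) (t : ℝ) :
    ‖z + t • EuclideanSpace.single i (1:ℝ)‖^2
      = ‖z‖^2 + 2 * (z i) * t + t^2 := by
  have h1 : ‖z + t • EuclideanSpace.single i (1:ℝ)‖^2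
      = ‖z‖^2 + 2 * inner ℝ z (t • EuclideanSpace.single i (1:ℝ))
        + ‖t • EuclideanSpace.single i (1:ℝ)‖^2 := norm_add_sq_real _ _
  rw [h1, real_inner_smul_right, norm_smul]
  have h2 : inner ℝ z (EuclideanSpace.single i (1:ℝ)) = z i := by
    rw [EuclideanSpace.inner_single_right]
    simp
  rw [h2]
  simp [Real.norm_eq_abs, mul_pow, sq_abs]
  ring

lemma norm_sq_sum {n : ℕ} (z : EuclideanSpace ℝ (Fin n)) :
    ∑ i : Fin n, (z i)^2 = ‖z‖^2 := by
  have := EuclideanSpace.norm_eq z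
  rw [this, Real.sq_sqrt (by positivity)]
  congr 1
  funext i
  rw [Real.norm_eq_abs, sq_abs]

lemma key_bound {n : ℕ}
    (K : ℝ) (hK : 0 < K)
    (v : EuclideanSpace ℝ (Fin n) → ℝ) (hv : ContDiff ℝ 2 v)
    (hv_nonneg : ∀ x, 0 ≤ v x)
    (hineq : ∀ x, K * (v x) ^ 2 ≤ (1 / 2) * euclideanLaplacian v x)
    (y : EuclideanSpace ℝ (Fin n)) (R : ℝ) (hR : 0 < R) :
    v y ≤ (2*(n:ℝ)+12) / (K * R^2) := by
  set A : ℝ := (2*(n:ℝ)+12)*R^2/K with hAdef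
  have hA : 0 < A := by positivity
  set w : EuclideanSpace ℝ (Fin n) → ℝ :=
    fun x => A * ((R^2 - ‖x - y‖^2)^2)⁻¹ with hwdef
  -- max of v on big closed ball
  obtain ⟨z, hz, hzmax⟩ := (isCompact_closedBall y R).exists_isMaxOn
    ⟨y, mem_closedBall_self hR.le⟩ (hv.continuous.continuousOn)
  set M : ℝ := v z with hMdef
  have hMy : v y ≤ M := hzmax (mem_closedBall_self hR.le)
  set C₀ : ℝ := M - v y + A/R^4 + 1 with hC₀def
  have hC₀ : 0 < C₀ := by
    have : 0 < A / R^4 := by positivity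
    simp only [hC₀def]; linarith
  set ε : ℝ := min (R^2/2) (Real.sqrt (A / C₀)) with hεdef
  have hεpos : 0 < ε := lt_min (by positivity) (Real.sqrt_pos.2 (by positivity))
  have hεle : ε ≤ R^2/2 := min_le_left _ _
  have hεsq : ε^2 ≤ A / C₀ := by
    have h1 : ε ≤ Real.sqrt (A / C₀) := min_le_right _ _
    have h2 := pow_le_pow_left₀ hεpos.le h1 2
    rwa [Real.sq_sqrt (by positivity)] at h2
  set R' : ℝ := Real.sqrt (R^2 - ε) with hR'def
  have hR'sq : R'^2 = R^2 - ε := Real.sq_sqrt (by linarith)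
  have hR'pos : 0 < R' := Real.sqrt_pos.2 (by linarith)
  have hR'lt : R' < R := by
    nlinarith [hR'sq, hR'pos]
  set u : EuclideanSpace ℝ (Fin n) → ℝ := fun x => v x - w x with hudef
  -- continuity of u on the small closed ball
  have hposball : ∀ x ∈ closedBall y R', 0 < R^2 - ‖x - y‖^2 := by
    intro x hx
    rw [mem_closedBall, dist_eq_norm] at hx
    have : ‖x - y‖ ≤ R' := hx
    nlinarith [norm_nonneg (x - y)]
  have hu_cont : ContinuousOn u (closedBall y R') := by
    apply (hv.continuous.continuousOn).sub
    apply ContinuousOn.mul continuousOn_const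
    apply ContinuousOn.inv₀
    · exact (((continuous_const.sub ((continuous_id.sub continuous_const).norm.pow 2)).pow 2)).continuousOn
    · intro x hx
      exact pow_ne_zero 2 (ne_of_gt (hposball x hx))
  obtain ⟨p, hp, hpmax⟩ := (isCompact_closedBall y R').exists_isMaxOn
    ⟨y, mem_closedBall_self hR'pos.le⟩ hu_cont
  have hyball : y ∈ closedBall y R' := mem_closedBall_self hR'pos.le
  have huyp : u y ≤ u p := hpmax hyball
  have hwy : w y = A / R^4 := by
    simp only [hwdef]
    rw [sub_self, norm_zero]
    norm_num
    rw [show (R^2)^2 = R^4 from by ring, div_eq_mul_inv]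
  -- p is strictly inside
  have hplt : dist p y < R' := by
    rcases lt_or_eq_of_le (mem_closedBall.1 hp) with h | h
    · exact h
    · exfalso
      have hnp : ‖p - y‖ = R' := by rw [← dist_eq_norm]; exact h
      have hwp : w p = A / ε^2 := by
        simp only [hwdef, hnp]
        rw [hR'sq]
        rw [show R^2 - (R^2 - ε) = ε from by ring, div_eq_mul_inv]
      have hC₀le : C₀ ≤ A / ε^2 := by
        rw [le_div_iff₀ (by positivity)]
        calc C₀ * ε^2 ≤ C₀ * (A / C₀) := by
              apply mul_le_mul_of_nonneg_left hεsq hC₀.le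
          _ = A := by field_simp
      have hvp : v p ≤ M := hzmax (closedBall_subset_closedBall hR'lt.le hp)
      have : u p ≤ M - C₀ := by
        simp only [hudef]
        rw [hwp]; linarith
      have huy : u y = v y - A / R^4 := by simp only [hudef]; rw [hwy]
      rw [huy] at huyp
      simp only [hC₀def] at this
      linarith
  have hlocmax : IsLocalMax u p := by
    have hball : ball y R' ∈ 𝓝 p := isOpen_ball.mem_nhds (mem_ball.2 hplt)
    filter_upwards [hball] with x hx
    exact hpmax (ball_subset_closedBall hx)
  -- setup at p
  set c : ℝ := R^2 - ‖p - y‖^2 with hcdef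
  have hnpR : ‖p - y‖ < R := by
    rw [← dist_eq_norm]; exact lt_trans hplt hR'lt
  have hc : 0 < c := by nlinarith [norm_nonneg (p - y)]
  have hcR : c ≤ R^2 := by nlinarith [norm_nonneg (p - y), sq_nonneg (‖p - y‖)]
  -- second derivative bound in each direction
  have hdir : ∀ i : Fin n,
      iteratedFDeriv ℝ 2 v p ![EuclideanSpace.single i 1, EuclideanSpace.single i 1]
        ≤ 24*A*((p - y) i)^2/c^4 + 4*A/c^3 := by
    intro i
    set e : EuclideanSpace ℝ (Fin n) := EuclideanSpace.single i (1:ℝ) with hedef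
    set b : ℝ := (p - y) i with hbdef
    have hline : ∀ t : ℝ, w (p + t • e) = A * ((c - 2*b*t - t^2)^2)⁻¹ := by
      intro t
      simp only [hwdef]
      congr 2
      have : p + t • e - y = (p - y) + t • e := by abel
      rw [this, norm_sq_line (p - y) i t, hcdef, hbdef]
      ring
    obtain ⟨hGa, hGb, hGc⟩ := barrier_line A b c hc
    set G : ℝ → ℝ := fun t : ℝ => A * ((c - 2*b*t - t^2)^2)⁻¹ with hGdef
    set g : ℝ → ℝ := fun t => v (p + t • e) - G t with hgdef
    have hmaxg : IsLocalMax g 0 := by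
      have hcont : ContinuousAt (fun t : ℝ => p + t • e) 0 :=
        (continuous_const.add (continuous_id.smul continuous_const)).continuousAt
      have h0 : p + (0:ℝ) • e = p := by simp
      have htend : Filter.Tendsto (fun t : ℝ => p + t • e) (𝓝 0) (𝓝 p) := by
        have h2 := hcont.tendsto
        rwa [h0] at h2
      have := htend.eventually hlocmax
      filter_upwards [this] with t ht
      simp only [hgdef]
      have hup : u p = g 0 := by
        simp only [hgdef, hudef, hGdef]
        rw [← hline 0]
        simp
      calc v (p + t • e) - G t = u (p + t • e) := by
            simp only [hudef]; rw [hline t]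
        _ ≤ u p := ht
        _ = g 0 := hup
    -- differentiability hypotheses
    have hvline : ∀ t : ℝ, HasDerivAt (fun s : ℝ => v (p + s • e))
        (fderiv ℝ v (p + t • e) e) t := fun t => line_hasDerivAt_s12 hv p e t
    have hda : ∀ᶠ t in 𝓝 (0:ℝ), DifferentiableAt ℝ g t := by
      filter_upwards [hGa] with t ht
      exact ((hvline t).differentiableAt).sub ht
    have hderivg : deriv g =ᶠ[𝓝 (0:ℝ)]
        fun t => fderiv ℝ v (p + t • e) e - deriv G t := by
      filter_upwards [hGa] with t ht
      simp only [hgdef]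
      rw [deriv_fun_sub ((hvline t).differentiableAt) ht, (hvline t).deriv]
    have hf1 : HasDerivAt (fun t : ℝ => fderiv ℝ v (p + t • e) e)
        (fderiv ℝ (fderiv ℝ v) (p + (0:ℝ) • e) e e) 0 := line_hasDerivAt2_s12 hv p e 0
    have hdb : DifferentiableAt ℝ (deriv g) 0 := by
      rw [hderivg.differentiableAt_iff]
      exact (hf1.differentiableAt).sub hGb
    have hkey := secondDeriv_nonpos_of_isLocalMax hda hdb hmaxg
    have hsplit : deriv (deriv g) 0
        = fderiv ℝ (fderiv ℝ v) p e e - (24*A*b^2/c^4 + 4*A/c^3) := by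
      rw [hderivg.deriv_eq, deriv_fun_sub (hf1.differentiableAt) hGb, hf1.deriv, hGc]
      simp
    rw [hsplit] at hkey
    have hiter : iteratedFDeriv ℝ 2 v p ![e, e] = fderiv ℝ (fderiv ℝ v) p e e := by
      rw [iteratedFDeriv_two_apply]
      simp
    rw [show (![EuclideanSpace.single i 1, EuclideanSpace.single i 1] :
        Fin 2 → EuclideanSpace ℝ (Fin n)) = ![e, e] from rfl, hiter]
    simp only [hbdef] at hkey ⊢
    linarith
  -- sum the bound
  have hlap : euclideanLaplacian v p
      ≤ 24*A*‖p - y‖^2/c^4 + (n:ℝ)*(4*A/c^3) := by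
    unfold euclideanLaplacian
    calc ∑ i : Fin n, iteratedFDeriv ℝ 2 v p ![EuclideanSpace.single i 1, EuclideanSpace.single i 1]
        ≤ ∑ i : Fin n, (24*A*((p - y) i)^2/c^4 + 4*A/c^3) := Finset.sum_le_sum (fun i _ => hdir i)
      _ = 24*A*(∑ i : Fin n, ((p - y) i)^2)/c^4 + (n:ℝ)*(4*A/c^3) := by
          rw [Finset.sum_add_distrib, Finset.sum_const, ← Finset.sum_div, ← Finset.mul_sum]
          simp [Finset.card_univ]
      _ = 24*A*‖p - y‖^2/c^4 + (n:ℝ)*(4*A/c^3) := by rw [norm_sq_sum (p - y)]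
  -- conclude v p ≤ w p
  have hchain : K * (v p)^2 ≤ K * (A/c^2)^2 := by
    have h1 := hineq p
    have h2 : ‖p - y‖^2 ≤ R^2 := by nlinarith [norm_nonneg (p - y)]
    have h3 : A/c^3 ≤ A*R^2/c^4 := by
      rw [div_le_div_iff₀ (by positivity) (by positivity)]
      calc A * c^4 = (A * c) * c^3 := by ring
        _ ≤ (A * R^2) * c^3 := by
            apply mul_le_mul_of_nonneg_right _ (by positivity)
            exact mul_le_mul_of_nonneg_left hcR hA.le
    have hnum : 24*A*‖p - y‖^2/c^4 + (n:ℝ)*(4*A/c^3)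
        ≤ (24*A*R^2 + 4*(n:ℝ)*A*R^2)/c^4 := by
      have hn0 : (0:ℝ) ≤ (n:ℝ) := Nat.cast_nonneg n
      have e1 : (n:ℝ)*(4*A/c^3) = 4*(n:ℝ)*A*c/c^4 := by
        field_simp
      rw [e1, ← add_div]
      rw [div_le_div_iff₀ (by positivity) (by positivity)]
      have hcc : 4*(n:ℝ)*A*c ≤ 4*(n:ℝ)*A*R^2 := by
        have : (0:ℝ) ≤ 4*(n:ℝ)*A := by positivity
        nlinarith
      have hN : 24*A*‖p - y‖^2 + 4*(n:ℝ)*A*c ≤ 24*A*R^2 + 4*(n:ℝ)*A*R^2 := by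
        have h24 : 24*A*‖p - y‖^2 ≤ 24*A*R^2 := by
          have : (0:ℝ) ≤ 24*A := by positivity
          nlinarith
        linarith
      exact mul_le_mul_of_nonneg_right hN (by positivity)
    have hKA : K * A = (2*(n:ℝ)+12)*R^2 := by
      simp only [hAdef]; field_simp
    calc K * (v p)^2 ≤ (1/2) * euclideanLaplacian v p := h1
      _ ≤ (1/2) * ((24*A*R^2 + 4*(n:ℝ)*A*R^2)/c^4) := by linarith
      _ = (12 + 2*(n:ℝ)) * A * R^2 / c^4 := by ring
      _ = K * (A/c^2)^2 := by
          have hgoal : K * (A/c^2)^2 = (12 + 2*(n:ℝ)) * A * R^2 / c^4 := by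
            rw [div_pow, show K * (A^2/(c^2)^2) = (K*A)*A/c^4 from by ring, hKA]
            ring
          exact hgoal.symm
  have hvp_le : v p ≤ A/c^2 := by
    have h1 : (v p)^2 ≤ (A/c^2)^2 := by
      have := hchain
      nlinarith
    nlinarith [hv_nonneg p, div_pos hA (show (0:ℝ) < c^2 by positivity)]
  have hwp : w p = A / c^2 := by
    simp only [hwdef, hcdef]
    rw [div_eq_mul_inv]
  have hup0 : u p ≤ 0 := by
    simp only [hudef]; rw [hwp]; linarith
  have : v y - A/R^4 ≤ 0 := by
    have huy : u y = v y - A / R^4 := by simp only [hudef]; rw [hwy]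
    linarith [huyp, hup0, huy ▸ huyp]
  have hfinal : A / R^4 = (2*(n:ℝ)+12) / (K * R^2) := by
    simp only [hAdef]
    field_simp
  linarith [hfinal ▸ this]


/-- Liouville consequence for the hyperbolic-angle inequality (Euclidean model
case): a nonnegative `C²` function `v` on `ℝⁿ` satisfying `(1/2) Δv ≥ K v²`
for a constant `K > 0` vanishes identically. -/
theorem liouville_hyperbolic_angle {n : ℕ} (hn : 1 ≤ n)
    (K : ℝ) (hK : 0 < K)
    (v : EuclideanSpace ℝ (Fin n) → ℝ) (hv : ContDiff ℝ 2 v)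
    (hv_nonneg : ∀ x, 0 ≤ v x)
    (hineq : ∀ x, K * (v x) ^ 2 ≤ (1 / 2) * euclideanLaplacian v x) :
    ∀ x, v x = 0 := by
  intro x
  refine le_antisymm ?_ (hv_nonneg x)
  by_contra h
  push_neg at h
  have hn12 : (0:ℝ) < 2*(n:ℝ)+12 := by positivity
  set R : ℝ := Real.sqrt ((2*(n:ℝ)+12)/(K * (v x / 2))) with hRdef
  have hR2 : R^2 = (2*(n:ℝ)+12)/(K * (v x / 2)) := Real.sq_sqrt (by positivity)
  have hRpos : 0 < R := Real.sqrt_pos.2 (by positivity)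
  have key := key_bound K hK v hv hv_nonneg hineq x R hRpos
  have heq : (2*(n:ℝ)+12)/(K*R^2) = v x / 2 := by
    rw [hR2]
    have h1 : K ≠ 0 := ne_of_gt hK
    have h2 : v x ≠ 0 := ne_of_gt h
    have h3 : (2*(n:ℝ)+12) ≠ 0 := ne_of_gt hn12
    field_simp
  rw [heq] at key
  linarith
end
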